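/- Let q ≥ 3 and let τ ∈ 𝔽_{q²} satisfy τ^q + τ = 1. For (a, ε) ∈ 𝔽_{q²}² with (a, ε) ≠ (0, 0), let N(a, ε) be the number of x ∈ 𝔽_{q²}, x ≠ 0, with a·τ·x^{q+1} + ε·x² = 0. Then: (i) N(a, ε) ∈ {0, q−1}; (ii) the number of pairs (a, ε) ≠ (0,0) with N(a, ε) = q−1 equals (q+1)(q²−1); (iii) the number of pairs (a, ε) ≠ (0,0) with N(a, ε) = 0 equals q(q−1)(q²−1). Equivalently, the code C_𝓛(𝙳,𝙶) for m = 2 is a [q²−1, 2]_{q²} two-weight cyclic code with nonzero weights q²−q and q²−1, occurring (q+1)(q²−1) and q(q−1)(q²−1) times respectively. -/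

import Mathlib

open Finset Polynomial

/-- Let `q ≥ 3` and `τ^q + τ = 1`. For `(a, ε) ≠ (0, 0)` let `N(a, ε)` be the
number of `x ∈ 𝔽_{q²}`, `x ≠ 0`, with `a·τ·x^{q+1} + ε·x² = 0`. Then (i) `N(a,ε) ∈ {0, q−1}`;
(ii) the number of pairs `(a, ε) ≠ (0,0)` with `N = q−1` equals `(q+1)(q²−1)`;
(iii) the number of pairs `(a, ε) ≠ (0,0)` with `N = 0` equals `q(q−1)(q²−1)`.
Equivalently, the `m = 2` code `C_𝓛(𝙳,𝙶)` is a `[q²−1, 2]_{q²}` two-weight cyclic code with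
nonzero weights `q²−q` and `q²−1`, occurring `(q+1)(q²−1)` and `q(q−1)(q²−1)` times. -/
theorem stmt_6 (q : ℕ) (hq : IsPrimePow q) (hq3 : 3 ≤ q)
    (F : Type*) [Field F] [Fintype F] [DecidableEq F] (hF : Fintype.card F = q ^ 2)
    (τ : F) (hτ : τ ^ q + τ = 1)
    (N : F → F → ℕ)
    (hN : ∀ a ε : F, N a ε =
      (Finset.univ.filter fun x : F => x ≠ 0 ∧ a * τ * x ^ (q + 1) + ε * x ^ 2 = 0).card) :
    (∀ a ε : F, (a, ε) ≠ (0, 0) → N a ε = 0 ∨ N a ε = q - 1) ∧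
    (Finset.univ.filter fun p : F × F => p ≠ (0, 0) ∧ N p.1 p.2 = q - 1).card
      = (q + 1) * (q ^ 2 - 1) ∧
    (Finset.univ.filter fun p : F × F => p ≠ (0, 0) ∧ N p.1 p.2 = 0).card
      = q * (q - 1) * (q ^ 2 - 1) := by
  classical
  have hq1 : 1 ≤ q := by omega
  have h9 : 9 ≤ q ^ 2 := by nlinarith
  have hfact : q ^ 2 - 1 = (q - 1) * (q + 1) := by
    zify [show 1 ≤ q ^ 2 by omega, hq1]; ring
  have hcardU : Fintype.card Fˣ = q ^ 2 - 1 := by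
    rw [Fintype.card_units, hF]
  -- a primitive root
  obtain ⟨g, hg⟩ := IsCyclic.exists_generator (α := Fˣ)
  have horder : orderOf g = q ^ 2 - 1 := by
    rw [orderOf_eq_card_of_forall_mem_zpowers hg, Nat.card_eq_fintype_card, hcardU]
  have hprim : IsPrimitiveRoot ((g : Fˣ) : F) (q ^ 2 - 1) := by
    rw [IsPrimitiveRoot.coe_units_iff, ← horder]
    exact IsPrimitiveRoot.orderOf g
  have hpos : 0 < q ^ 2 - 1 := by omega
  -- roots of unity counts
  have hcard_roots1 : (univ.filter fun c : F => c ^ (q + 1) = 1).card = q + 1 := by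
    have h2 : IsPrimitiveRoot (((g : Fˣ) : F) ^ (q - 1)) (q + 1) :=
      hprim.pow hpos hfact
    have he : (univ.filter fun c : F => c ^ (q + 1) = 1) = nthRootsFinset (q + 1) (1 : F) := by
      ext x
      simp [Polynomial.mem_nthRootsFinset (show 0 < q + 1 by omega) (1 : F)]
    rw [he, h2.card_nthRootsFinset]
  have hcard_ker : (univ.filter fun y : F => y ^ (q - 1) = 1).card = q - 1 := by
    have h2 : IsPrimitiveRoot (((g : Fˣ) : F) ^ (q + 1)) (q - 1) :=
      hprim.pow hpos (by rw [hfact]; ring)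
    have he : (univ.filter fun y : F => y ^ (q - 1) = 1) = nthRootsFinset (q - 1) (1 : F) := by
      ext x
      simp [Polynomial.mem_nthRootsFinset (show 0 < q - 1 by omega) (1 : F)]
    rw [he, h2.card_nthRootsFinset]
  have hpow1 : ∀ x : F, x ≠ 0 → x ^ (q ^ 2 - 1) = 1 := by
    intro x hx
    have := FiniteField.pow_card_sub_one_eq_one x hx
    rwa [hF] at this
  -- fiber counting
  have hfiber : ∀ c : F, c ≠ 0 →
      (univ.filter fun x : F => x ≠ 0 ∧ x ^ (q - 1) = c).card
        = if c ^ (q + 1) = 1 then q - 1 else 0 := by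
    intro c hc
    by_cases hc1 : c ^ (q + 1) = 1
    · rw [if_pos hc1]
      -- find x₀ with x₀ ^ (q-1) = c
      obtain ⟨m, hm0⟩ := hg (Units.mk0 c hc)
      have hm : g ^ m = Units.mk0 c hc := hm0
      have hu1 : (Units.mk0 c hc) ^ (q + 1) = 1 := by
        ext; push_cast; exact hc1
      have hdvd : ((q ^ 2 - 1 : ℕ) : ℤ) ∣ m * (q + 1) := by
        rw [← horder]
        refine orderOf_dvd_iff_zpow_eq_one.mpr ?_
        rw [zpow_mul, hm]
        rw [show ((q : ℤ) + 1) = ((q + 1 : ℕ) : ℤ) by push_cast; ring, zpow_natCast, hu1]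
      have hdvd2 : ((q : ℤ) - 1) ∣ m := by
        have hfz : ((q ^ 2 - 1 : ℕ) : ℤ) = ((q : ℤ) - 1) * ((q : ℤ) + 1) := by
          rw [hfact]; push_cast [hq1]; ring
        rw [hfz] at hdvd
        have hne : ((q : ℤ) + 1) ≠ 0 := by positivity
        exact (mul_dvd_mul_iff_right hne).mp hdvd
      obtain ⟨t, ht⟩ := hdvd2
      have hex : ∃ x₀ : F, x₀ ≠ 0 ∧ x₀ ^ (q - 1) = c := by
        refine ⟨((g ^ t : Fˣ) : F), Units.ne_zero _, ?_⟩
        have key : (g ^ t) ^ ((q - 1 : ℕ)) = Units.mk0 c hc := by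
          rw [← hm, ← zpow_natCast (g ^ t), ← zpow_mul, ht]
          congr 1
          push_cast [hq1]; ring
        rw [← Units.val_pow_eq_pow_val, key, Units.val_mk0]
      obtain ⟨x₀, hx₀, hx₀c⟩ := hex
      -- bijection with kernel
      have hbij : (univ.filter fun x : F => x ≠ 0 ∧ x ^ (q - 1) = c).card
          = (univ.filter fun y : F => y ^ (q - 1) = 1).card := by
        refine Finset.card_bij' (fun x _ => x₀⁻¹ * x) (fun y _ => x₀ * y) ?_ ?_ ?_ ?_
        · intro x hx
          simp only [mem_filter, mem_univ, true_and] at hx ⊢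
          obtain ⟨hx0, hxc⟩ := hx
          rw [mul_pow, hxc, inv_pow, hx₀c, inv_mul_cancel₀ hc]
        · intro y hy
          simp only [mem_filter, mem_univ, true_and] at hy ⊢
          have hy0 : y ≠ 0 := by
            intro h; rw [h] at hy
            rw [zero_pow (show q - 1 ≠ 0 by omega)] at hy
            exact one_ne_zero hy.symm
          refine ⟨mul_ne_zero hx₀ hy0, ?_⟩
          rw [mul_pow, hx₀c, hy, mul_one]
        · intro x _; field_simp
        · intro y _; field_simp
      rw [hbij, hcard_ker]
    · rw [if_neg hc1]
      rw [Finset.card_eq_zero, Finset.filter_eq_empty_iff]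
      intro x _
      rintro ⟨hx0, hxc⟩
      apply hc1
      rw [← hxc, ← pow_mul]
      rw [show (q - 1) * (q + 1) = q ^ 2 - 1 from hfact.symm]
      exact hpow1 x hx0
  -- τ ≠ 0
  have hτ0 : τ ≠ 0 := by
    intro h
    rw [h, zero_pow (show q ≠ 0 by omega), add_zero] at hτ
    exact zero_ne_one hτ
  -- value of N in nondegenerate case
  have hNval : ∀ a ε : F, a ≠ 0 → ε ≠ 0 →
      N a ε = if (-ε / (a * τ)) ^ (q + 1) = 1 then q - 1 else 0 := by
    intro a ε ha he
    have haτ : a * τ ≠ 0 := mul_ne_zero ha hτ0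
    have hc : -ε / (a * τ) ≠ 0 := div_ne_zero (neg_ne_zero.mpr he) haτ
    rw [hN, ← hfiber _ hc]
    congr 1
    ext x
    simp only [mem_filter, mem_univ, true_and, and_congr_right_iff]
    intro hx
    have hx2 : (x : F) ^ 2 ≠ 0 := pow_ne_zero _ hx
    have hsplit : x ^ (q + 1) = x ^ (q - 1) * x ^ 2 := by
      rw [← pow_add]; congr 1; omega
    constructor
    · intro h
      rw [hsplit] at h
      have h' : (a * τ * x ^ (q - 1) + ε) * x ^ 2 = 0 := by linear_combination h
      have h'' := (mul_eq_zero.mp h').resolve_right hx2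
      rw [eq_div_iff haτ]
      linear_combination h''
    · intro h
      rw [hsplit]
      rw [eq_div_iff haτ] at h
      linear_combination x ^ 2 * h
  -- degenerate cases
  have hN0a : ∀ ε : F, ε ≠ 0 → N 0 ε = 0 := by
    intro ε he
    rw [hN, Finset.card_eq_zero, Finset.filter_eq_empty_iff]
    intro x _
    rintro ⟨hx0, hxc⟩
    rw [zero_mul, zero_mul, zero_add] at hxc
    exact (pow_ne_zero _ hx0) ((mul_eq_zero.mp hxc).resolve_left he)
  have hN0b : ∀ a : F, a ≠ 0 → N a 0 = 0 := by
    intro a ha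
    rw [hN, Finset.card_eq_zero, Finset.filter_eq_empty_iff]
    intro x _
    rintro ⟨hx0, hxc⟩
    rw [zero_mul, add_zero] at hxc
    rcases mul_eq_zero.mp hxc with h | h
    · exact (mul_ne_zero ha hτ0) h
    · exact (pow_ne_zero _ hx0) h
  -- part (i)
  have part1 : ∀ a ε : F, (a, ε) ≠ (0, 0) → N a ε = 0 ∨ N a ε = q - 1 := by
    intro a ε hp
    by_cases ha : a = 0
    · subst ha
      have he : ε ≠ 0 := by
        intro h; exact hp (by rw [h])
      exact Or.inl (hN0a ε he)
    · by_cases he : ε = 0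
      · subst he; exact Or.inl (hN0b a ha)
      · rw [hNval a ε ha he]
        split_ifs
        · exact Or.inr rfl
        · exact Or.inl rfl
  have hqm1 : q - 1 ≠ 0 := by omega
  -- characterization of the N = q-1 set
  have hA : (univ.filter fun p : F × F => p ≠ (0, 0) ∧ N p.1 p.2 = q - 1)
      = univ.filter
          (fun p : F × F => p.1 ≠ 0 ∧ p.2 ≠ 0 ∧ (-(p.2) / (p.1 * τ)) ^ (q + 1) = 1) := by
    ext ⟨a, ε⟩
    simp only [mem_filter, mem_univ, true_and]
    constructor
    · rintro ⟨hp, hNe⟩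
      have ha : a ≠ 0 := by
        intro h; subst h
        have he : ε ≠ 0 := fun h => hp (by rw [h])
        rw [hN0a ε he] at hNe; omega
      have he : ε ≠ 0 := by
        intro h; subst h
        rw [hN0b a ha] at hNe; omega
      refine ⟨ha, he, ?_⟩
      rw [hNval a ε ha he] at hNe
      by_contra hcond
      rw [if_neg hcond] at hNe; omega
    · rintro ⟨ha, he, hcond⟩
      refine ⟨?_, ?_⟩
      · intro h
        exact ha (congrArg Prod.fst h)
      · rw [hNval a ε ha he, if_pos hcond]
  -- card of nonzero elements
  have hcard_ne : (univ.filter fun a : F => a ≠ 0).card = q ^ 2 - 1 := by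
    rw [Finset.filter_ne', Finset.card_erase_of_mem (Finset.mem_univ _),
      Finset.card_univ, hF]
  -- part (ii)
  have part2 : (univ.filter fun p : F × F => p ≠ (0, 0) ∧ N p.1 p.2 = q - 1).card
      = (q + 1) * (q ^ 2 - 1) := by
    rw [hA]
    have hbij : (univ.filter
          (fun p : F × F => p.1 ≠ 0 ∧ p.2 ≠ 0 ∧ (-(p.2) / (p.1 * τ)) ^ (q + 1) = 1)).card
        = ((univ.filter fun a : F => a ≠ 0) ×ˢ
            (univ.filter fun c : F => c ^ (q + 1) = 1)).card := by
      refine Finset.card_bij' (fun p _ => (p.1, -(p.2) / (p.1 * τ)))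
        (fun p _ => (p.1, -(p.1 * τ * p.2))) ?_ ?_ ?_ ?_
      · rintro ⟨a, ε⟩ hp
        simp only [mem_filter, mem_univ, true_and, Finset.mem_product] at hp ⊢
        exact ⟨hp.1, hp.2.2⟩
      · rintro ⟨a, c⟩ hp
        simp only [Finset.mem_product, mem_filter, mem_univ, true_and] at hp ⊢
        obtain ⟨ha, hc⟩ := hp
        have hc0 : c ≠ 0 := by
          intro h; rw [h, zero_pow (show q + 1 ≠ 0 by omega)] at hc
          exact zero_ne_one hc
        have haτ : a * τ ≠ 0 := mul_ne_zero ha hτ0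
        refine ⟨ha, by simpa using mul_ne_zero haτ hc0, ?_⟩
        have : -(-(a * τ * c)) / (a * τ) = c := by field_simp
        rw [this]; exact hc
      · rintro ⟨a, ε⟩ hp
        simp only [mem_filter, mem_univ, true_and] at hp
        have haτ : a * τ ≠ 0 := mul_ne_zero hp.1 hτ0
        simp only [Prod.mk.injEq, true_and]
        field_simp
        exact mul_div_cancel_left₀ ε hp.1
      · rintro ⟨a, c⟩ hp
        simp only [Finset.mem_product, mem_filter, mem_univ, true_and] at hp
        have haτ : a * τ ≠ 0 := mul_ne_zero hp.1 hτ0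
        simp only [Prod.mk.injEq, true_and]
        field_simp
        exact mul_div_cancel_left₀ c hp.1
    rw [hbij, Finset.card_product, hcard_ne, hcard_roots1, mul_comm]
  -- part (iii)
  have htot : (univ.filter fun p : F × F => p ≠ (0, 0)).card = q ^ 2 * q ^ 2 - 1 := by
    rw [Finset.filter_ne', Finset.card_erase_of_mem (Finset.mem_univ _),
      Finset.card_univ, Fintype.card_prod, hF]
  have key := Finset.card_filter_add_card_filter_not
    (s := univ.filter fun p : F × F => p ≠ (0, 0)) (p := fun p => N p.1 p.2 = q - 1)
  rw [Finset.filter_filter, Finset.filter_filter, htot] at key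
  have hBeq : (univ.filter fun p : F × F => p ≠ (0, 0) ∧ N p.1 p.2 = 0)
      = (univ.filter fun p : F × F => p ≠ (0, 0) ∧ ¬(N p.1 p.2 = q - 1)) := by
    ext ⟨a, ε⟩
    simp only [mem_filter, mem_univ, true_and, and_congr_right_iff]
    intro hp
    rcases part1 a ε hp with h | h
    · simp [h]; omega
    · simp [h]; omega
  have part3 : (univ.filter fun p : F × F => p ≠ (0, 0) ∧ N p.1 p.2 = 0).card
      = q * (q - 1) * (q ^ 2 - 1) := by
    rw [hBeq]
    have harith : (q + 1) * (q ^ 2 - 1) + q * (q - 1) * (q ^ 2 - 1) = q ^ 2 * q ^ 2 - 1 := by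
      zify [show 1 ≤ q ^ 2 by omega, hq1, show 1 ≤ q ^ 2 * q ^ 2 by nlinarith]
      ring
    omega
  exact ⟨part1, part2, part3⟩
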